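/- Let a ≥ 1 and b ≥ 0 be fixed integers and let τ ≥ 1 be a fixed integer. Then there exists κ_0 such that for every κ ≥ κ_0 there is an (aκ+b, κ, τ)-covering design with at most C(aτ+1, τ) blocks (a number depending only on a and τ). -/

import Mathlib

/-- A `(ν, κ, τ)`-covering design: a collection of `κ`-subsets (blocks) of a `ν`-set such that
every `τ`-subset is contained in at least one block. -/
def IsCoveringDesign (ν κ τ : ℕ) (B : Finset (Finset (Fin ν))) : Prop :=
  (∀ b ∈ B, b.card = κ) ∧ ∀ T : Finset (Fin ν), T.card = τ → ∃ b ∈ B, T ⊆ b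

/-- For fixed constants `a ≥ 1`, `b ≥ 0` and `τ ≥ 1`, for all sufficiently large `κ` there is an
`(aκ + b, κ, τ)`-covering design with at most `(aτ+1).choose τ` blocks, a bound depending only
on `a` and `τ`. -/
theorem exists_coveringDesign_const_size
    (a b τ : ℕ) (ha : 1 ≤ a) (hτ : 1 ≤ τ) :
    ∃ κ₀ : ℕ, ∀ κ : ℕ, κ₀ ≤ κ →
      ∃ B : Finset (Finset (Fin (a * κ + b))),
        IsCoveringDesign (a * κ + b) κ τ B ∧ B.card ≤ (a * τ + 1).choose τ := by
  classical
  refine ⟨τ * (b + a * (τ - 1)) + τ, fun κ hκ => ?_⟩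
  set ν := a * κ + b with hν
  set n := a * τ + 1 with hn
  set p := κ / τ with hp
  have hκτ : τ ≤ κ := le_trans (Nat.le_add_left _ _) hκ
  have hpb : b + a * (τ - 1) ≤ p := by
    rw [hp, Nat.le_div_iff_mul_le (by omega)]
    calc (b + a * (τ - 1)) * τ = τ * (b + a * (τ - 1)) := Nat.mul_comm _ _
      _ ≤ κ := by omega
  have hp1 : 1 ≤ p := Nat.one_le_div_iff (by omega) |>.2 hκτ
  have hτp : τ * p ≤ κ := by rw [hp]; exact Nat.mul_div_le κ τ |>.trans_eq' (by ring_nf)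
  have hνnp : ν ≤ n * p := by
    have hmod : τ * p + κ % τ = κ := by
      rw [hp]; exact Nat.div_add_mod κ τ
    have hmlt : κ % τ ≤ τ - 1 := by
      have := Nat.mod_lt κ (show 0 < τ by omega); omega
    calc ν = a * κ + b := hν
      _ = a * (τ * p) + (a * (κ % τ) + b) := by
          conv_lhs => rw [← hmod]
          ring
      _ ≤ a * (τ * p) + p := by
          have : a * (κ % τ) ≤ a * (τ - 1) := Nat.mul_le_mul_left a hmlt
          omega
      _ = n * p := by rw [hn]; ring
  have hκν : κ ≤ ν := by
    rw [hν]; nlinarith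
  -- the "part union" of a set of part indices
  set PU : Finset ℕ → Finset (Fin ν) :=
    fun S => Finset.univ.filter (fun x : Fin ν => (x : ℕ) / p ∈ S) with hPU
  have hPUcard : ∀ S : Finset ℕ, (PU S).card ≤ S.card * p := by
    intro S
    have : (PU S).card ≤ (S ×ˢ Finset.range p).card := by
      refine Finset.card_le_card_of_injOn (fun x : Fin ν => ((x : ℕ) / p, (x : ℕ) % p)) ?_ ?_
      · intro x hx
        simp only [hPU, Finset.mem_coe, Finset.mem_filter] at hx
        exact Finset.mem_product.2 ⟨hx.2, Finset.mem_range.2 (Nat.mod_lt _ (by omega))⟩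
      · intro x _ y _ hxy
        have h1 : (x : ℕ) / p = (y : ℕ) / p := congrArg Prod.fst hxy
        have h2 : (x : ℕ) % p = (y : ℕ) % p := congrArg Prod.snd hxy
        have : (x : ℕ) = (y : ℕ) := by
          conv_lhs => rw [← Nat.div_add_mod (x : ℕ) p]
          conv_rhs => rw [← Nat.div_add_mod (y : ℕ) p]
          rw [h1, h2]
        exact Fin.ext this
    simpa [Finset.card_product] using this
  -- block associated to a set of part indices
  set f : Finset ℕ → Finset (Fin ν) := fun S =>
    if h : (PU S).card ≤ κ then
      (Finset.exists_subsuperset_card_eq (Finset.subset_univ (PU S)) h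
        (by simpa using hκν)).choose
    else ∅ with hf
  have hfspec : ∀ S : Finset ℕ, (PU S).card ≤ κ → PU S ⊆ f S ∧ (f S).card = κ := by
    intro S hS
    rw [hf]
    simp only [hS, dif_pos]
    obtain ⟨h1, _, h3⟩ := (Finset.exists_subsuperset_card_eq
      (Finset.subset_univ (PU S)) hS (by simpa using hκν)).choose_spec
    exact ⟨h1, h3⟩
  have hcardPU : ∀ S ∈ (Finset.range n).powersetCard τ, (PU S).card ≤ κ := by
    intro S hS
    obtain ⟨-, hScard⟩ := Finset.mem_powersetCard.1 hS
    calc (PU S).card ≤ S.card * p := hPUcard S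
      _ = τ * p := by rw [hScard]
      _ ≤ κ := hτp
  refine ⟨((Finset.range n).powersetCard τ).image f, ⟨?_, ?_⟩, ?_⟩
  · intro bl hbl
    obtain ⟨S, hS, rfl⟩ := Finset.mem_image.1 hbl
    exact (hfspec S (hcardPU S hS)).2
  · intro T hT
    set I := T.image (fun x : Fin ν => (x : ℕ) / p) with hI
    have hIsub : I ⊆ Finset.range n := by
      intro i hi
      obtain ⟨x, _, rfl⟩ := Finset.mem_image.1 hi
      have : (x : ℕ) < n * p := lt_of_lt_of_le x.2 hνnp
      exact Finset.mem_range.2 ((Nat.div_lt_iff_lt_mul (by omega)).2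
        this)
    have hIcard : I.card ≤ τ := hT ▸ Finset.card_image_le
    have hτn : τ ≤ (Finset.range n).card := by simp [hn]; nlinarith
    obtain ⟨S, hIS, hSn, hScard⟩ := Finset.exists_subsuperset_card_eq hIsub hIcard hτn
    have hSmem : S ∈ (Finset.range n).powersetCard τ :=
      Finset.mem_powersetCard.2 ⟨hSn, hScard⟩
    refine ⟨f S, Finset.mem_image_of_mem f hSmem, ?_⟩
    have hTPU : T ⊆ PU S := by
      intro x hx
      simp only [hPU, Finset.mem_filter, Finset.mem_univ, true_and]
      exact hIS (Finset.mem_image_of_mem _ hx)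
    exact hTPU.trans (hfspec S (hcardPU S hSmem)).1
  · calc (((Finset.range n).powersetCard τ).image f).card
        ≤ ((Finset.range n).powersetCard τ).card := Finset.card_image_le
      _ = n.choose τ := by rw [Finset.card_powersetCard, Finset.card_range]
      _ = (a * τ + 1).choose τ := by rw [hn]
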